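/- Let X, Y be real reflexive Banach spaces (the canonical embedding of each into its double dual is surjective), with Y smooth (for every unit vector y ∈ Y there is a unique continuous linear functional f with ‖f‖ = 1 and f(y) = 1) and strictly convex. Let A, B : X → Y be compact linear operators, and suppose that M_A is a connected subset of X or that M_A = {−u, u} for some unit vector u ∈ X. Then the following are equivalent: (i) A is norm-parallel to B; (ii) there exists a vector x ∈ M_A ∩ M_B such that Ax is norm-parallel to Bx. Moreover, if A ≠ 0, B ≠ 0 and x satisfies (ii), then ‖B‖·Ax = ‖A‖·Bx or ‖B‖·Ax = −‖A‖·Bx. -/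

import Mathlib

open Filter NormedSpace

/-- A compact operator from a reflexive Banach space attains its norm (nonzero case). -/
lemma exists_norm_attain
    {X Y : Type*} [NormedAddCommGroup X] [NormedSpace ℝ X]
    [NormedAddCommGroup Y] [NormedSpace ℝ Y]
    (hXrefl : Function.Surjective (NormedSpace.inclusionInDoubleDual ℝ X))
    (T : X →L[ℝ] Y) (hT : IsCompactOperator T) (hTpos : 0 < ‖T‖) :
    ∃ x : X, ‖x‖ = 1 ∧ ‖T x‖ = ‖T‖ := by
  have hseq : ∀ n : ℕ, ∃ x : X, ‖x‖ < 1 ∧ ‖T‖ - 1 / (n + 1) < ‖T x‖ := by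
    intro n
    have h1 : ‖T‖ - 1 / (n + 1 : ℝ) < ‖T‖ := by
      have : (0 : ℝ) < 1 / (n + 1) := by positivity
      linarith
    exact T.exists_lt_apply_of_lt_opNorm h1
  choose u hu1 hu2 using hseq
  have hnorm_tendsto : Tendsto (fun n : ℕ => ‖T (u n)‖) atTop (nhds ‖T‖) := by
    have hlow : Tendsto (fun n : ℕ => ‖T‖ - 1 / (n + 1)) atTop (nhds ‖T‖) := by
      have := tendsto_one_div_add_atTop_nhds_zero_nat (𝕜 := ℝ)
      have h := (tendsto_const_nhds (x := ‖T‖) (f := atTop (α := ℕ))).sub this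
      simpa using h
    refine tendsto_of_tendsto_of_tendsto_of_le_of_le hlow tendsto_const_nhds
      (fun n => (hu2 n).le) (fun n => ?_)
    calc ‖T (u n)‖ ≤ ‖T‖ * ‖u n‖ := T.le_opNorm _
      _ ≤ ‖T‖ * 1 := by nlinarith [hu1 n, norm_nonneg (u n)]
      _ = ‖T‖ := mul_one _
  let 𝒰 : Ultrafilter ℕ := Ultrafilter.of atTop
  have h𝒰 : (𝒰 : Filter ℕ) ≤ atTop := Ultrafilter.of_le atTop
  set ι := NormedSpace.inclusionInDoubleDual ℝ X with hι
  have hnormι : ∀ z : X, ‖ι z‖ = ‖z‖ := fun z =>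
    (NormedSpace.inclusionInDoubleDualLi ℝ (E := X)).norm_map z
  let φ : ℕ → WeakDual ℝ (StrongDual ℝ X) := fun n => StrongDual.toWeakDual (ι (u n))
  have hball : IsCompact (WeakDual.toStrongDual ⁻¹' Metric.closedBall (0 : StrongDual ℝ (StrongDual ℝ X)) 1) :=
    WeakDual.isCompact_closedBall 0 1
  have hmem : ∀ n, φ n ∈ WeakDual.toStrongDual ⁻¹' Metric.closedBall (0 : StrongDual ℝ (StrongDual ℝ X)) 1 := by
    intro n
    refine (mem_closedBall_zero_iff (E := StrongDual ℝ (StrongDual ℝ X))).mpr ?_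
    show ‖ι (u n)‖ ≤ 1
    rw [hnormι]
    exact (hu1 n).le
  obtain ⟨ψ, hψmem, hψ⟩ := hball.ultrafilter_le_nhds (Ultrafilter.map φ 𝒰)
    (by simp only [Ultrafilter.coe_map]; exact le_principal_iff.2 (Filter.mem_map.2
      (Filter.univ_mem' fun n => hmem n)))
  have hψtendsto : Tendsto φ 𝒰 (nhds ψ) := hψ
  obtain ⟨x, hx⟩ := hXrefl (WeakDual.toStrongDual ψ)
  have hxle : ‖x‖ ≤ 1 := by
    rw [← hnormι x, hx]
    exact (mem_closedBall_zero_iff (E := StrongDual ℝ (StrongDual ℝ X))).mp hψmem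
  have hweak : ∀ f : StrongDual ℝ X, Tendsto (fun n => f (u n)) 𝒰 (nhds (f x)) := by
    intro f
    have hev : Continuous fun ψ' : WeakDual ℝ (StrongDual ℝ X) => ψ' f := WeakDual.eval_continuous f
    have := (hev.tendsto ψ).comp hψtendsto
    have heq : ∀ n, (fun ψ' : WeakDual ℝ (StrongDual ℝ X) => ψ' f) (φ n) = f (u n) := by
      intro n; exact NormedSpace.dual_def ℝ X (u n) f
    have heq2 : ψ f = f x := by
      have : WeakDual.toStrongDual ψ f = f x := by rw [← hx]; exact NormedSpace.dual_def ℝ X x f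
      exact this
    rw [show (fun n => f (u n)) = (fun ψ' : WeakDual ℝ (StrongDual ℝ X) => ψ' f) ∘ φ from
      funext fun n => (heq n).symm, ← heq2]
    exact this
  have hK : IsCompact (closure (T '' Metric.closedBall 0 1)) :=
    hT.isCompact_closure_image_closedBall (𝕜₁ := ℝ) 1
  have hTmem : ∀ n, T (u n) ∈ closure (T '' Metric.closedBall 0 1) := fun n =>
    subset_closure ⟨u n, by simpa [dist_zero_right] using (hu1 n).le, rfl⟩
  obtain ⟨y, _, hytendsto'⟩ := hK.ultrafilter_le_nhds (Ultrafilter.map (fun n => T (u n)) 𝒰)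
    (by simp only [Ultrafilter.coe_map]; exact le_principal_iff.2 (Filter.mem_map.2
      (Filter.univ_mem' fun n => hTmem n)))
  have hytendsto : Tendsto (fun n => T (u n)) 𝒰 (nhds y) := hytendsto'
  have hynorm : ‖y‖ = ‖T‖ := by
    have h1 : Tendsto (fun n => ‖T (u n)‖) 𝒰 (nhds ‖y‖) :=
      (continuous_norm.tendsto y).comp hytendsto
    have h2 : Tendsto (fun n => ‖T (u n)‖) 𝒰 (nhds ‖T‖) := hnorm_tendsto.mono_left h𝒰
    exact tendsto_nhds_unique h1 h2
  have hyTx : y = T x := by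
    rw [NormedSpace.eq_iff_forall_dual_eq ℝ]
    intro g
    have h1 : Tendsto (fun n => g (T (u n))) 𝒰 (nhds (g y)) :=
      (g.continuous.tendsto y).comp hytendsto
    have h2 : Tendsto (fun n => (g.comp T) (u n)) 𝒰 (nhds ((g.comp T) x)) := hweak (g.comp T)
    simp only [ContinuousLinearMap.comp_apply] at h2
    exact tendsto_nhds_unique h1 h2
  have hTx : ‖T x‖ = ‖T‖ := by rw [← hyTx, hynorm]
  have hxge : 1 ≤ ‖x‖ := by
    by_contra h
    push_neg at h
    have : ‖T x‖ < ‖T‖ := by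
      calc ‖T x‖ ≤ ‖T‖ * ‖x‖ := T.le_opNorm x
        _ < ‖T‖ * 1 := mul_lt_mul_of_pos_left h hTpos
        _ = ‖T‖ := mul_one _
    rw [hTx] at this
    exact lt_irrefl _ this
  exact ⟨x, le_antisymm hxle hxge, hTx⟩

theorem compact_parallel_iff_pointwise_parallel
    {X Y : Type*} [NormedAddCommGroup X] [NormedSpace ℝ X] [CompleteSpace X]
    [NormedAddCommGroup Y] [NormedSpace ℝ Y] [CompleteSpace Y] [StrictConvexSpace ℝ Y]
    (hXrefl : Function.Surjective (NormedSpace.inclusionInDoubleDual ℝ X))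
    (hYrefl : Function.Surjective (NormedSpace.inclusionInDoubleDual ℝ Y))
    (hsm : ∀ u : Y, ‖u‖ = 1 → ∃! f : Y →L[ℝ] ℝ, ‖f‖ = 1 ∧ f u = 1)
    (A B : X →L[ℝ] Y) (hA : IsCompactOperator A) (hB : IsCompactOperator B)
    (hMA : IsConnected {x : X | ‖x‖ = 1 ∧ ‖A x‖ = ‖A‖} ∨
      ∃ u : X, ‖u‖ = 1 ∧ {x : X | ‖x‖ = 1 ∧ ‖A x‖ = ‖A‖} = {-u, u}) :
    ((∃ ε : ℝ, (ε = 1 ∨ ε = -1) ∧ ‖A + ε • B‖ = ‖A‖ + ‖B‖) ↔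
      ∃ x : X, (‖x‖ = 1 ∧ ‖A x‖ = ‖A‖) ∧ ‖B x‖ = ‖B‖ ∧
        ∃ ε : ℝ, (ε = 1 ∨ ε = -1) ∧ ‖A x + ε • B x‖ = ‖A x‖ + ‖B x‖) ∧
    (A ≠ 0 → B ≠ 0 → ∀ x : X, ‖x‖ = 1 → ‖A x‖ = ‖A‖ → ‖B x‖ = ‖B‖ →
      (∃ ε : ℝ, (ε = 1 ∨ ε = -1) ∧ ‖A x + ε • B x‖ = ‖A x‖ + ‖B x‖) →
      (‖B‖ • A x = ‖A‖ • B x ∨ ‖B‖ • A x = -(‖A‖ • B x))) := by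
  constructor
  · constructor
    · rintro ⟨ε, hε, hnorm⟩
      have habs : |ε| = 1 := by rcases hε with rfl | rfl <;> simp
      have hsmulnorm : ∀ v : Y, ‖ε • v‖ = ‖v‖ := fun v => by
        rw [norm_smul, Real.norm_eq_abs, habs, one_mul]
      -- a unit vector in M_A
      obtain ⟨u0, hu0norm, hu0A⟩ : ∃ u0 : X, ‖u0‖ = 1 ∧ ‖A u0‖ = ‖A‖ := by
        rcases hMA with hconn | ⟨u, hu, hset⟩
        · obtain ⟨z, hz⟩ := hconn.nonempty
          exact ⟨z, hz.1, hz.2⟩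
        · have : u ∈ {x : X | ‖x‖ = 1 ∧ ‖A x‖ = ‖A‖} := by
            rw [hset]; exact Or.inr rfl
          exact ⟨u, this.1, this.2⟩
      by_cases hz : ‖A‖ + ‖B‖ = 0
      · have hA0 : ‖A‖ = 0 := by nlinarith [norm_nonneg A, norm_nonneg B]
        have hB0 : ‖B‖ = 0 := by nlinarith [norm_nonneg A, norm_nonneg B]
        have hAx : A u0 = 0 := by
          rw [← norm_eq_zero, hu0A, hA0]
        have hBx : B u0 = 0 := by
          rw [← norm_eq_zero]
          have := B.le_opNorm u0
          rw [hu0norm, hB0] at this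
          have := norm_nonneg (B u0)
          linarith [B.le_opNorm u0, (by rw [hu0norm, hB0, mul_one] : ‖B‖ * ‖u0‖ = (0:ℝ))]
        refine ⟨u0, ⟨hu0norm, hu0A⟩, ?_, ε, hε, ?_⟩
        · rw [hBx, norm_zero, hB0]
        · rw [hAx, hBx]; simp
      · have hpos : 0 < ‖A‖ + ‖B‖ :=
          lt_of_le_of_ne (by positivity) (Ne.symm hz)
        have hTc : IsCompactOperator (A + ε • B) := by
          have h := hA.add (hB.smul ε)
          have hcoe : (⇑(A + ε • B) : X → Y) = ⇑A + ε • ⇑B := by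
            funext z; simp
          rw [show (IsCompactOperator ⇑(A + ε • B)) = IsCompactOperator (⇑A + ε • ⇑B) from
            congrArg _ hcoe]
          exact h
        obtain ⟨x, hx1, hxT⟩ := exists_norm_attain hXrefl (A + ε • B) hTc (by rw [hnorm]; exact hpos)
        have hTapp : (A + ε • B) x = A x + ε • B x := by simp
        have key : ‖A x + ε • B x‖ = ‖A‖ + ‖B‖ := by rw [← hTapp, hxT, hnorm]
        have h1 : ‖A x‖ ≤ ‖A‖ := by
          have := A.le_opNorm x; rwa [hx1, mul_one] at this
        have h2 : ‖B x‖ ≤ ‖B‖ := by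
          have := B.le_opNorm x; rwa [hx1, mul_one] at this
        have h3 : ‖A‖ + ‖B‖ ≤ ‖A x‖ + ‖B x‖ := by
          calc ‖A‖ + ‖B‖ = ‖A x + ε • B x‖ := key.symm
            _ ≤ ‖A x‖ + ‖ε • B x‖ := norm_add_le _ _
            _ = ‖A x‖ + ‖B x‖ := by rw [hsmulnorm]
        have hAx : ‖A x‖ = ‖A‖ := by linarith
        have hBx : ‖B x‖ = ‖B‖ := by linarith
        exact ⟨x, ⟨hx1, hAx⟩, hBx, ε, hε, by rw [key, hAx, hBx]⟩
    · rintro ⟨x, ⟨hx1, hxA⟩, hxB, ε, hε, hadd⟩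
      have habs : |ε| = 1 := by rcases hε with rfl | rfl <;> simp
      have hεB : ‖ε • B‖ = ‖B‖ := by rw [norm_smul ε B, Real.norm_eq_abs, habs, one_mul]
      refine ⟨ε, hε, le_antisymm ?_ ?_⟩
      · calc ‖A + ε • B‖ ≤ ‖A‖ + ‖ε • B‖ := norm_add_le _ _
          _ = ‖A‖ + ‖B‖ := by rw [hεB]
      · calc ‖A‖ + ‖B‖ = ‖A x + ε • B x‖ := by rw [hadd, hxA, hxB]
          _ = ‖(A + ε • B) x‖ := by simp
          _ ≤ ‖A + ε • B‖ * ‖x‖ := (A + ε • B).le_opNorm x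
          _ = ‖A + ε • B‖ := by rw [hx1, mul_one]
  · intro hA0 hB0 x hx1 hxA hxB hpar
    obtain ⟨ε, hε, hadd⟩ := hpar
    have habs : |ε| = 1 := by rcases hε with rfl | rfl <;> simp
    have hεBx : ‖ε • B x‖ = ‖B x‖ := by rw [norm_smul, Real.norm_eq_abs, habs, one_mul]
    have hsr : SameRay ℝ (A x) (ε • B x) := by
      rw [sameRay_iff_norm_add, hεBx]
      exact hadd
    have hkey : ‖A x‖ • (ε • B x) = ‖ε • B x‖ • A x := hsr.norm_smul_eq
    rw [hxA, hεBx, hxB] at hkey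
    rcases hε with rfl | rfl
    · left
      rw [← hkey, one_smul]
    · right
      rw [← hkey]
      rw [smul_comm]
      simp
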